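/- arXiv:1711.01673 — 7 statements merged into one kernel-verified Lean document; each statement's English description precedes it below -/
import Mathlib

section
/- Every distributive module over a local ring is uniserial, i.e. if R is a local ring and M is an R-module whose lattice of submodules is distributive, then the submodules of M are totally ordered by inclusion. -/
/-- Key lemma: in a distributive module over a local ring, any two elements are
comparable in the sense that one lies in the cyclic submodule generated by the other. -/
theorem key_cyclic_comparable
    {R M : Type*} [Ring R] [IsLocalRing R] [AddCommGroup M] [Module R M]
    (hdistrib : ∀ A B C : Submodule R M, A ⊓ (B ⊔ C) = (A ⊓ B) ⊔ (A ⊓ C))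
    (x y : M) :
    x ∈ Submodule.span R {y} ∨ y ∈ Submodule.span R {x} := by
  have hz : x + y ∈ Submodule.span R {x + y} ⊓
      (Submodule.span R {x} ⊔ Submodule.span R {y}) :=
    ⟨Submodule.mem_span_singleton_self _,
      Submodule.add_mem_sup (Submodule.mem_span_singleton_self x)
        (Submodule.mem_span_singleton_self y)⟩
  rw [hdistrib] at hz
  obtain ⟨u, hu, v, hv, huv⟩ := Submodule.mem_sup.mp hz
  obtain ⟨hu1, hu2⟩ := hu
  obtain ⟨hv1, hv2⟩ := hv
  obtain ⟨a, ha⟩ := Submodule.mem_span_singleton.mp hu1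
  obtain ⟨b, hb⟩ := Submodule.mem_span_singleton.mp hv1
  set c := 1 - (a + b) with hcdef
  have hc : c • (x + y) = 0 := by
    have h1 : (a + b) • (x + y) = x + y := by rw [add_smul, ha, hb, huv]
    rw [hcdef, sub_smul, one_smul, h1, sub_self]
  rcases IsLocalRing.isUnit_or_isUnit_of_add_one (a := a) (b := b + c) (by rw [hcdef]; abel) with h | h
  · right
    have hay : a • y ∈ Submodule.span R {x} := by
      have heq : a • y = u - a • x := by rw [← ha, smul_add]; abel
      rw [heq]
      exact Submodule.sub_mem _ hu2
        (Submodule.smul_mem _ _ (Submodule.mem_span_singleton_self x))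
    obtain ⟨a', ha'⟩ := h
    have h2 := Submodule.smul_mem _ ((a'⁻¹ : Rˣ) : R) hay
    rw [← ha'] at h2
    rwa [← smul_assoc, smul_eq_mul, a'.inv_mul, one_smul] at h2
  · left
    have hbx : b • x ∈ Submodule.span R {y} := by
      have heq : b • x = v - b • y := by rw [← hb, smul_add]; abel
      rw [heq]
      exact Submodule.sub_mem _ hv2
        (Submodule.smul_mem _ _ (Submodule.mem_span_singleton_self y))
    have hcx : c • x ∈ Submodule.span R {y} := by
      have heq : c • x = -(c • y) := by
        rw [smul_add] at hc
        exact eq_neg_of_add_eq_zero_left hc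
      rw [heq]
      exact Submodule.neg_mem _
        (Submodule.smul_mem _ _ (Submodule.mem_span_singleton_self y))
    have hbcx : (b + c) • x ∈ Submodule.span R {y} := by
      rw [add_smul]; exact Submodule.add_mem _ hbx hcx
    obtain ⟨w, hw⟩ := h
    have h2 := Submodule.smul_mem _ ((w⁻¹ : Rˣ) : R) hbcx
    rw [← hw] at h2
    rwa [← smul_assoc, smul_eq_mul, w.inv_mul, one_smul] at h2

/-- A module is *distributive* if its lattice of submodules satisfies
`A ⊓ (B ⊔ C) = (A ⊓ B) ⊔ (A ⊓ C)`. Every distributive module over a local ring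
is uniserial: its submodules are totally ordered by inclusion. -/
theorem distributive_module_over_local_ring_is_uniserial
    {R M : Type*} [Ring R] [IsLocalRing R] [AddCommGroup M] [Module R M]
    (hdistrib : ∀ A B C : Submodule R M, A ⊓ (B ⊔ C) = (A ⊓ B) ⊔ (A ⊓ C)) :
    ∀ A B : Submodule R M, A ≤ B ∨ B ≤ A := by
  intro A B
  by_cases hAB : A ≤ B
  · exact Or.inl hAB
  · right
    rw [SetLike.not_le_iff_exists] at hAB
    obtain ⟨a, haA, haB⟩ := hAB
    intro b hbB
    rcases key_cyclic_comparable hdistrib a b with h | h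
    · exact absurd ((Submodule.span_singleton_le_iff_mem b B).mpr hbB h) haB
    · exact (Submodule.span_singleton_le_iff_mem a A).mpr haA h
end

section
/- Let R be a uniserial domain and let I be a two-sided ideal of R. Then the set P = {b ∈ R | bI ⊊ I} is a completely prime two-sided ideal of R. -/
/-- A subset of a ring is a right ideal if it contains `0`, is closed under
addition, and absorbs multiplication by ring elements on the right. -/
def IsRightIdeal {R : Type*} [Ring R] (S : Set R) : Prop :=
  (0 : R) ∈ S ∧ (∀ a ∈ S, ∀ b ∈ S, a + b ∈ S) ∧ (∀ a ∈ S, ∀ r : R, a * r ∈ S)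

/-- A subset of a ring is a left ideal if it contains `0`, is closed under
addition, and absorbs multiplication by ring elements on the left. -/
def IsLeftIdeal {R : Type*} [Ring R] (S : Set R) : Prop :=
  (0 : R) ∈ S ∧ (∀ a ∈ S, ∀ b ∈ S, a + b ∈ S) ∧ (∀ a ∈ S, ∀ r : R, r * a ∈ S)

/-- A ring is uniserial if its right ideals are totally ordered by inclusion
and its left ideals are totally ordered by inclusion. -/
def IsUniserialRing (R : Type*) [Ring R] : Prop :=
  (∀ S T : Set R, IsRightIdeal S → IsRightIdeal T → S ⊆ T ∨ T ⊆ S) ∧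
  (∀ S T : Set R, IsLeftIdeal S → IsLeftIdeal T → S ⊆ T ∨ T ⊆ S)

/-- Let `R` be a uniserial domain and `I` a nonzero two-sided ideal of `R`.
Then `P = {b ∈ R | bI ⊊ I}` is a completely prime two-sided ideal of `R`. -/
theorem shrinkers_isCompletelyPrime
    {R : Type*} [Ring R] [IsDomain R] (hR : IsUniserialRing R)
    (I : Set R) (hIr : IsRightIdeal I) (hIl : IsLeftIdeal I) (hI0 : I ≠ {0}) :
    IsRightIdeal {b : R | {x : R | ∃ i ∈ I, x = b * i} ⊂ I} ∧
    IsLeftIdeal {b : R | {x : R | ∃ i ∈ I, x = b * i} ⊂ I} ∧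
    {b : R | {x : R | ∃ i ∈ I, x = b * i} ⊂ I} ≠ Set.univ ∧
    (∀ x y : R, {z : R | ∃ i ∈ I, z = (x * y) * i} ⊂ I →
      {z : R | ∃ i ∈ I, z = x * i} ⊂ I ∨ {z : R | ∃ i ∈ I, z = y * i} ⊂ I) := by
  obtain ⟨hI0mem, hIadd, hIrmul⟩ := hIr
  obtain ⟨-, -, hIlmul⟩ := hIl
  -- bI ⊆ I always
  have hsub : ∀ b : R, {x : R | ∃ i ∈ I, x = b * i} ⊆ I := by
    rintro b x ⟨i, hi, rfl⟩
    exact hIlmul i hi b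
  -- bI ⊊ I ↔ ¬ (I ⊆ bI)
  have key : ∀ b : R, {x : R | ∃ i ∈ I, x = b * i} ⊂ I ↔
      ¬ I ⊆ {x : R | ∃ i ∈ I, x = b * i} := by
    intro b
    constructor
    · intro h hle
      exact h.2 hle
    · intro h
      exact ⟨hsub b, h⟩
  -- I contains a nonzero element
  have hex : ∃ y ∈ I, y ≠ 0 := by
    by_contra h
    push_neg at h
    apply hI0
    apply Set.eq_singleton_iff_unique_mem.2
    exact ⟨hI0mem, h⟩
  obtain ⟨y0, hy0I, hy0⟩ := hex
  -- 0 belongs to P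
  have hzero : {x : R | ∃ i ∈ I, x = (0 : R) * i} ⊂ I := by
    rw [key]
    intro hle
    obtain ⟨i, -, hi⟩ := hle hy0I
    exact hy0 (by simpa using hi)
  -- each bI is a right ideal
  have hright : ∀ b : R, IsRightIdeal {x : R | ∃ i ∈ I, x = b * i} := by
    intro b
    refine ⟨⟨0, hI0mem, by simp⟩, ?_, ?_⟩
    · rintro x ⟨i, hi, rfl⟩ y ⟨j, hj, rfl⟩
      exact ⟨i + j, hIadd i hi j hj, by rw [mul_add]⟩
    · rintro x ⟨i, hi, rfl⟩ r
      exact ⟨i * r, hIrmul i hi r, by rw [mul_assoc]⟩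
  -- addition, one-sided case
  have haddcase : ∀ a b : R,
      {x : R | ∃ i ∈ I, x = a * i} ⊆ {x : R | ∃ i ∈ I, x = b * i} →
      {x : R | ∃ i ∈ I, x = b * i} ⊂ I →
      {x : R | ∃ i ∈ I, x = (a + b) * i} ⊂ I := by
    intro a b hab hb
    rw [key] at hb ⊢
    intro hle
    apply hb
    intro x hx
    obtain ⟨i, hi, rfl⟩ := hle hx
    obtain ⟨j, hj, hji⟩ := hab ⟨i, hi, rfl⟩
    exact ⟨j + i, hIadd j hj i hi, by rw [mul_add, ← hji, add_mul]⟩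
  -- addition
  have hadd : ∀ a ∈ {b : R | {x : R | ∃ i ∈ I, x = b * i} ⊂ I},
      ∀ b ∈ {b : R | {x : R | ∃ i ∈ I, x = b * i} ⊂ I},
      a + b ∈ {b : R | {x : R | ∃ i ∈ I, x = b * i} ⊂ I} := by
    intro a ha b hb
    rcases hR.1 _ _ (hright a) (hright b) with h | h
    · exact haddcase a b h hb
    · have := haddcase b a h ha
      simpa [add_comm b a] using this
  -- right absorption
  have hrabs : ∀ a ∈ {b : R | {x : R | ∃ i ∈ I, x = b * i} ⊂ I},
      ∀ r : R, a * r ∈ {b : R | {x : R | ∃ i ∈ I, x = b * i} ⊂ I} := by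
    intro a ha r
    simp only [Set.mem_setOf_eq, key] at ha ⊢
    intro hle
    apply ha
    intro x hx
    obtain ⟨i, hi, rfl⟩ := hle hx
    exact ⟨r * i, hIlmul i hi r, by rw [mul_assoc]⟩
  -- left absorption (uses cancellation in the domain)
  have hlabs : ∀ a ∈ {b : R | {x : R | ∃ i ∈ I, x = b * i} ⊂ I},
      ∀ r : R, r * a ∈ {b : R | {x : R | ∃ i ∈ I, x = b * i} ⊂ I} := by
    intro a ha r
    simp only [Set.mem_setOf_eq, key] at ha ⊢
    intro hle
    -- first, r ≠ 0
    have hr : r ≠ 0 := by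
      rintro rfl
      obtain ⟨i, -, hi⟩ := hle hy0I
      exact hy0 (by simpa using hi)
    apply ha
    intro x hx
    have hrx : r * x ∈ I := hIlmul x hx r
    obtain ⟨j, hj, hjx⟩ := hle hrx
    refine ⟨j, hj, ?_⟩
    have : r * x = r * (a * j) := by rw [hjx, mul_assoc]
    exact mul_left_cancel₀ hr this
  refine ⟨⟨hzero, hadd, hrabs⟩, ⟨hzero, hadd, hlabs⟩, ?_, ?_⟩
  · -- P ≠ univ : 1 ∉ P
    intro h
    have h1 : {x : R | ∃ i ∈ I, x = (1 : R) * i} ⊂ I := by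
      have := h ▸ Set.mem_univ (1 : R)
      exact this
    rw [key] at h1
    exact h1 (fun x hx => ⟨x, hx, by simp⟩)
  · -- completely prime
    intro x y hxy
    by_contra h
    push_neg at h
    obtain ⟨hx, hy⟩ := h
    rw [key, not_not] at hx hy
    rw [key] at hxy
    apply hxy
    intro z hz
    obtain ⟨i, hi, rfl⟩ := hx hz
    obtain ⟨j, hj, rfl⟩ := hy hi
    exact ⟨j, hj, by rw [mul_assoc]⟩
end

section
/- Let R be a rank one uniserial domain (a uniserial domain whose only non-zero completely prime two-sided ideal is the Jacobson radical J(R)). If a ∈ R is non-zero and aR is a two-sided ideal, then aR = Ra. -/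
/-- A subset of a ring is a completely prime (two-sided, proper) ideal if it
is a two-sided ideal, proper, and `x * y ∈ P` implies `x ∈ P` or `y ∈ P`. -/
def IsCompletelyPrimeIdeal {R : Type*} [Ring R] (P : Set R) : Prop :=
  IsRightIdeal P ∧ IsLeftIdeal P ∧ P ≠ Set.univ ∧
    ∀ x y : R, x * y ∈ P → x ∈ P ∨ y ∈ P

section Aux
variable {R : Type*} [Ring R] [IsDomain R]

lemma aux_inv_comm {x y : R} (h : x * y = 1) : y * x = 1 := by
  have hx : x ≠ 0 := by rintro rfl; rw [zero_mul] at h; exact one_ne_zero h.symm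
  apply mul_left_cancel₀ hx
  rw [← mul_assoc, h, one_mul, mul_one]

lemma aux_isUnit_of_mul_one {x y : R} (h : x * y = 1) : IsUnit x :=
  ⟨⟨x, y, h, aux_inv_comm h⟩, rfl⟩

lemma aux_nonunit_mul_right {x : R} (hx : ¬ IsUnit x) (r : R) : ¬ IsUnit (x * r) := by
  intro h
  obtain ⟨u, hu⟩ := h
  apply hx
  apply aux_isUnit_of_mul_one (y := r * (↑u⁻¹ : R))
  rw [← mul_assoc, ← hu]; exact u.mul_inv

lemma aux_nonunit_mul_left {x : R} (hx : ¬ IsUnit x) (r : R) : ¬ IsUnit (r * x) := by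
  intro h
  obtain ⟨u, hu⟩ := h
  apply hx
  have h1 : ((↑u⁻¹ : R) * r) * x = 1 := by rw [mul_assoc, ← hu]; exact u.inv_mul
  exact aux_isUnit_of_mul_one (aux_inv_comm h1)

lemma aux_principal_right (c : R) : IsRightIdeal {z : R | ∃ t, z = c * t} := by
  refine ⟨⟨0, (mul_zero c).symm⟩, ?_, ?_⟩
  · rintro x ⟨t, rfl⟩ y ⟨t', rfl⟩; exact ⟨t + t', (mul_add c t t').symm⟩
  · rintro x ⟨t, rfl⟩ r; exact ⟨t * r, mul_assoc c t r⟩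

lemma aux_principal_left (c : R) : IsLeftIdeal {z : R | ∃ t, z = t * c} := by
  refine ⟨⟨0, (zero_mul c).symm⟩, ?_, ?_⟩
  · rintro x ⟨t, rfl⟩ y ⟨t', rfl⟩; exact ⟨t + t', (add_mul t t' c).symm⟩
  · rintro x ⟨t, rfl⟩ r; exact ⟨r * t, (mul_assoc r t c).symm⟩

lemma aux_nonunit_add_sub {x y t : R} (hx : x = y * t) (hy : ¬ IsUnit y) :
    ¬ IsUnit (x + y) := by
  intro hu
  obtain ⟨u, hu'⟩ := hu
  apply hy
  apply aux_isUnit_of_mul_one (y := (t + 1) * (↑u⁻¹ : R))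
  rw [← mul_assoc]
  have h2 : y * (t + 1) = x + y := by rw [mul_add, mul_one, ← hx]
  rw [h2, ← hu']; exact u.mul_inv

lemma aux_nonunit_add
    (htot : ∀ S T : Set R, IsRightIdeal S → IsRightIdeal T → S ⊆ T ∨ T ⊆ S)
    {x y : R} (hx : ¬ IsUnit x) (hy : ¬ IsUnit y) : ¬ IsUnit (x + y) := by
  rcases htot _ _ (aux_principal_right x) (aux_principal_right y) with h | h
  · obtain ⟨t, ht⟩ := h ⟨1, (mul_one x).symm⟩
    exact aux_nonunit_add_sub ht hy
  · obtain ⟨t, ht⟩ := h ⟨1, (mul_one y).symm⟩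
    rw [add_comm]
    exact aux_nonunit_add_sub ht hx

end Aux

/-- Let `R` be a rank one uniserial domain, i.e. a uniserial domain whose only
nonzero completely prime two-sided ideal is `J(R)` (the set of non-units).
If `a ≠ 0` and the principal right ideal `aR` is a two-sided ideal, then
`aR = Ra`. -/
theorem principal_twoSided_ideal_eq
    {R : Type*} [Ring R] [IsDomain R] (hR : IsUniserialRing R)
    (hrankone : ∀ P : Set R, IsCompletelyPrimeIdeal P → P ≠ {0} →
      P = {x : R | ¬ IsUnit x})
    (a : R) (ha : a ≠ 0)
    (htwosided : IsLeftIdeal {x : R | ∃ r : R, x = a * r}) :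
    {x : R | ∃ r : R, x = a * r} = {x : R | ∃ r : R, x = r * a} := by
  classical
  have hca : ∀ {t t' : R}, a * t = a * t' → t = t' := fun h => mul_left_cancel₀ ha h
  have hmem : ∀ x : R, ∃ t, x * a = a * t := fun x =>
    htwosided.2.2 a ⟨1, (mul_one a).symm⟩ x
  choose σ hσ using hmem
  have σ0 : σ 0 = 0 := hca (by rw [← hσ 0, zero_mul, mul_zero])
  have σ1 : σ 1 = 1 := hca (by rw [← hσ 1, one_mul, mul_one])
  have σmul : ∀ x y, σ (x * y) = σ x * σ y := by
    intro x y
    apply hca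
    rw [← hσ (x * y), ← mul_assoc a, ← hσ x, mul_assoc, mul_assoc x a, ← hσ y]
  have σadd : ∀ x y, σ (x + y) = σ x + σ y := by
    intro x y
    apply hca
    rw [← hσ (x + y), mul_add, ← hσ x, ← hσ y, add_mul]
  -- dichotomy from left uniseriality
  have dich : ∀ r : R, (∃ s, a * r = s * a) ∨ ∃ s : R, σ s * r = 1 := by
    intro r
    rcases hR.2 _ _ (aux_principal_left a) (aux_principal_left (a * r)) with h | h
    · obtain ⟨s, hs⟩ := h ⟨1, (one_mul a).symm⟩
      right
      refine ⟨s, (hca ?_).symm⟩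
      rw [mul_one, ← mul_assoc, ← hσ s, mul_assoc, ← hs]
    · obtain ⟨s, hs⟩ := h ⟨1, (one_mul (a * r)).symm⟩
      exact Or.inl ⟨s, hs⟩
  have keyn : ∀ r : R, ¬ IsUnit r → ∃ s, a * r = s * a := by
    intro r hr
    rcases dich r with h | ⟨s, h1⟩
    · exact h
    · exact absurd (aux_isUnit_of_mul_one (aux_inv_comm h1)) hr
  ext x
  constructor
  · rintro ⟨r, rfl⟩
    rcases dich r with h | ⟨s, h1⟩
    · exact h
    by_cases hdiv : ∀ z : R, z ≠ 0 → IsUnit z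
    · obtain ⟨u, hu⟩ := hdiv a ha
      have h2 : (↑u⁻¹ : R) * a = 1 := by rw [← hu]; exact u.inv_mul
      exact ⟨a * r * ↑u⁻¹, by rw [mul_assoc (a * r), h2, mul_one]⟩
    · push_neg at hdiv
      obtain ⟨j, hj0, hju⟩ := hdiv
      set P : Set R := {x : R | ¬ IsUnit (σ x)} with hPdef
      have hCP : IsCompletelyPrimeIdeal P := by
        refine ⟨⟨?_, ?_, ?_⟩, ⟨?_, ?_, ?_⟩, ?_, ?_⟩
        · show ¬ IsUnit (σ 0)
          rw [σ0]; exact not_isUnit_zero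
        · intro x hx y hy
          show ¬ IsUnit (σ (x + y))
          rw [σadd]; exact aux_nonunit_add hR.1 hx hy
        · intro x hx r
          show ¬ IsUnit (σ (x * r))
          rw [σmul]; exact aux_nonunit_mul_right hx (σ r)
        · show ¬ IsUnit (σ 0)
          rw [σ0]; exact not_isUnit_zero
        · intro x hx y hy
          show ¬ IsUnit (σ (x + y))
          rw [σadd]; exact aux_nonunit_add hR.1 hx hy
        · intro x hx r
          show ¬ IsUnit (σ (r * x))
          rw [σmul]; exact aux_nonunit_mul_left hx (σ r)
        · intro hcontra
          have h1m : (1 : R) ∈ P := hcontra ▸ Set.mem_univ 1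
          exact h1m (by show IsUnit (σ 1); rw [σ1]; exact isUnit_one)
        · intro x y hxy
          by_contra hc
          push_neg at hc
          obtain ⟨hx, hy⟩ := hc
          simp only [hPdef, Set.mem_setOf_eq, not_not] at hx hy
          exact hxy (by show IsUnit (σ (x * y)); rw [σmul]; exact hx.mul hy)
      have hPne : P ≠ {0} := by
        obtain ⟨s, hs⟩ := keyn j hju
        have hsj : σ s = j := hca (by rw [← hσ s, ← hs])
        have hsP : s ∈ P := by show ¬ IsUnit (σ s); rw [hsj]; exact hju
        have hs0 : s ≠ 0 := by
          rintro rfl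
          apply hj0
          exact hca (by rw [hs, zero_mul, mul_zero])
        intro h0
        rw [h0] at hsP
        exact hs0 hsP
      have hP := hrankone P hCP hPne
      -- σ s is a unit, hence s is a unit
      have hsu : IsUnit s := by
        by_contra hsn
        have : s ∈ P := hP ▸ (hsn : s ∈ {x : R | ¬ IsUnit x})
        exact this (aux_isUnit_of_mul_one h1)
      obtain ⟨u, hu⟩ := hsu
      have hinv : σ (↑u⁻¹ : R) * σ s = 1 := by
        rw [← σmul, ← hu, u.inv_mul, σ1]
      have hr : σ (↑u⁻¹ : R) = r := by
        calc σ (↑u⁻¹ : R) = σ (↑u⁻¹ : R) * (σ s * r) := by rw [h1, mul_one]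
        _ = (σ (↑u⁻¹ : R) * σ s) * r := by rw [mul_assoc]
        _ = r := by rw [hinv, one_mul]
      exact ⟨(↑u⁻¹ : R), by rw [hσ (↑u⁻¹ : R), hr]⟩
  · rintro ⟨r, rfl⟩
    exact ⟨σ r, hσ r⟩
end

section
/- Let Γ be a dense additive subgroup of ℝ, let α, β ∈ Γ with α, β ≥ 0, let γ, δ ∈ Γ with γ, δ > 0, and let ε₁, ε₂ ∈ Γ. Then there exists μ ∈ Γ with α ≤ ε₁ + μ < α + γ and β ≤ ε₂ − μ < β + δ if and only if α + β ≤ ε₁ + ε₂ < (α + γ) + (β + δ). -/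
/-- Let `Γ` be a dense additive subgroup of `ℝ`, `α, β ∈ Γ` nonnegative,
`γ, δ ∈ Γ` positive, and `ε₁, ε₂ ∈ Γ`. Then there exists `μ ∈ Γ` with
`α ≤ ε₁ + μ < α + γ` and `β ≤ ε₂ - μ < β + δ` if and only if
`α + β ≤ ε₁ + ε₂ < (α + γ) + (β + δ)`. -/
theorem dense_subgroup_shift_iff
    (Γ : AddSubgroup ℝ) (hΓ : Dense (Γ : Set ℝ))
    (α β γ δ ε₁ ε₂ : ℝ)
    (hα : α ∈ Γ) (hβ : β ∈ Γ) (hγ : γ ∈ Γ) (hδ : δ ∈ Γ)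
    (hε₁ : ε₁ ∈ Γ) (hε₂ : ε₂ ∈ Γ)
    (hα0 : 0 ≤ α) (hβ0 : 0 ≤ β) (hγ0 : 0 < γ) (hδ0 : 0 < δ) :
    (∃ μ ∈ Γ, (α ≤ ε₁ + μ ∧ ε₁ + μ < α + γ) ∧ (β ≤ ε₂ - μ ∧ ε₂ - μ < β + δ)) ↔
      (α + β ≤ ε₁ + ε₂ ∧ ε₁ + ε₂ < (α + γ) + (β + δ)) := by
  constructor
  · rintro ⟨μ, -, ⟨h1, h2⟩, h3, h4⟩
    constructor <;> linarith
  · rintro ⟨hle, hlt⟩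
    rcases eq_or_lt_of_le hle with heq | hlt'
    · exact ⟨α - ε₁, sub_mem hα hε₁, ⟨by linarith, by linarith⟩, by constructor <;> linarith⟩
    · have hne : max (α - ε₁) (ε₂ - β - δ) < min (α + γ - ε₁) (ε₂ - β) := by
        rw [max_lt_iff, lt_min_iff, lt_min_iff]
        refine ⟨⟨by linarith, by linarith⟩, by linarith, by linarith⟩
      obtain ⟨μ, hμΓ, hμ⟩ := hΓ.exists_between hne
      rw [Set.mem_Ioo, max_lt_iff, lt_min_iff] at hμ
      obtain ⟨⟨a1, a2⟩, b1, b2⟩ := hμ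
      exact ⟨μ, hμΓ, ⟨by linarith, by linarith⟩, by linarith, by linarith⟩
end

section
/- Let Γ be a dense additive subgroup of ℝ, let α, β ∈ Γ with α, β ≥ 0, let γ, δ ∈ Γ with γ, δ > 0, let q ∈ Γ and ε ∈ ℝ \ Γ. Then there exists μ ∈ Γ with α ≤ ε + μ < α + γ and β ≤ q − μ < β + δ if and only if α + β < ε + q < (α + γ) + (β + δ). -/
/-- Let `Γ` be a dense additive subgroup of `ℝ`, `α, β ∈ Γ` nonnegative,
`γ, δ ∈ Γ` positive, `q ∈ Γ`, and `ε ∈ ℝ \ Γ`. Then there exists `μ ∈ Γ` with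
`α ≤ ε + μ < α + γ` and `β ≤ q - μ < β + δ` if and only if
`α + β < ε + q ∧ ε + q < (α + γ) + (β + δ)`. -/
theorem dense_subgroup_shift_iff_irrational_one
    (Γ : AddSubgroup ℝ) (hΓ : Dense (Γ : Set ℝ))
    (α β γ δ q ε : ℝ)
    (hα : α ∈ Γ) (hβ : β ∈ Γ) (hγ : γ ∈ Γ) (hδ : δ ∈ Γ)
    (hq : q ∈ Γ) (hε : ε ∉ Γ)
    (hα0 : 0 ≤ α) (hβ0 : 0 ≤ β) (hγ0 : 0 < γ) (hδ0 : 0 < δ) :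
    (∃ μ ∈ Γ, (α ≤ ε + μ ∧ ε + μ < α + γ) ∧ (β ≤ q - μ ∧ q - μ < β + δ)) ↔
      (α + β < ε + q ∧ ε + q < (α + γ) + (β + δ)) := by
  constructor
  · rintro ⟨μ, hμ, ⟨h1, h2⟩, ⟨h3, h4⟩⟩
    have h1' : α < ε + μ := lt_of_le_of_ne h1 fun h => hε (by
      have : ε = α - μ := by linarith
      rw [this]; exact Γ.sub_mem hα hμ)
    constructor <;> linarith
  · rintro ⟨hl, hr⟩
    have hLU : max (α - ε) (q - β - δ) < min (α + γ - ε) (q - β) := by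
      apply max_lt <;> apply lt_min <;> linarith
    obtain ⟨μ, hμΓ, hμmem⟩ := hΓ.exists_between hLU
    obtain ⟨hL, hU⟩ := hμmem
    have h1 : α - ε < μ := lt_of_le_of_lt (le_max_left _ _) hL
    have h2 : q - β - δ < μ := lt_of_le_of_lt (le_max_right _ _) hL
    have h3 : μ < α + γ - ε := lt_of_lt_of_le hU (min_le_left _ _)
    have h4 : μ < q - β := lt_of_lt_of_le hU (min_le_right _ _)
    exact ⟨μ, hμΓ, ⟨by linarith, by linarith⟩, ⟨by linarith, by linarith⟩⟩
end

section
/- Let Γ be a dense additive subgroup of ℝ and let ε₁, ε₂ ∈ ℝ \ Γ. For α, β ∈ Γ with α, β ≥ 0 and γ, δ ∈ Γ with γ, δ > 0: there exists μ ∈ Γ with α ≤ ε₁ + μ < α + γ and β ≤ ε₂ − μ < β + δ if and only if α + β < ε₁ + ε₂ < (α + γ) + (β + δ). -/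
/-- Let `Γ` be a dense additive subgroup of `ℝ`, `α, β ∈ Γ` nonnegative,
`γ, δ ∈ Γ` positive, and `ε₁, ε₂ ∈ ℝ \ Γ`. Then there exists `μ ∈ Γ` with
`α ≤ ε₁ + μ < α + γ` and `β ≤ ε₂ - μ < β + δ` if and only if
`α + β < ε₁ + ε₂ ∧ ε₁ + ε₂ < (α + γ) + (β + δ)`. -/
theorem dense_subgroup_shift_iff_irrational_two
    (Γ : AddSubgroup ℝ) (hΓ : Dense (Γ : Set ℝ))
    (α β γ δ ε₁ ε₂ : ℝ)
    (hα : α ∈ Γ) (hβ : β ∈ Γ) (hγ : γ ∈ Γ) (hδ : δ ∈ Γ)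
    (hε₁ : ε₁ ∉ Γ) (hε₂ : ε₂ ∉ Γ)
    (hα0 : 0 ≤ α) (hβ0 : 0 ≤ β) (hγ0 : 0 < γ) (hδ0 : 0 < δ) :
    (∃ μ ∈ Γ, (α ≤ ε₁ + μ ∧ ε₁ + μ < α + γ) ∧ (β ≤ ε₂ - μ ∧ ε₂ - μ < β + δ)) ↔
      (α + β < ε₁ + ε₂ ∧ ε₁ + ε₂ < (α + γ) + (β + δ)) := by
  constructor
  · rintro ⟨μ, hμ, ⟨h1, h2⟩, ⟨h3, h4⟩⟩
    constructor
    · rcases lt_or_eq_of_le h1 with h | h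
      · linarith
      · exfalso
        have hE : ε₁ = α - μ := by linarith
        exact hε₁ (hE ▸ Γ.sub_mem hα hμ)
    · linarith
  · rintro ⟨h1, h2⟩
    have hlt : max (α - ε₁) (ε₂ - β - δ) < min (α + γ - ε₁) (ε₂ - β) := by
      simp only [max_lt_iff, lt_min_iff]
      constructor <;> constructor <;> linarith
    obtain ⟨μ, hμΓ, hμ1, hμ2⟩ := hΓ.exists_between hlt
    refine ⟨μ, hμΓ, ⟨?_, ?_⟩, ?_, ?_⟩
    · have := lt_of_le_of_lt (le_max_left _ _) hμ1; linarith
    · have := lt_of_lt_of_le hμ2 (min_le_left _ _); linarith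
    · have := lt_of_lt_of_le hμ2 (min_le_right _ _); linarith
    · have := lt_of_le_of_lt (le_max_right _ _) hμ1; linarith
end

section
/- Let R be a uniserial domain with Jacobson radical J satisfying J² = J, let w ∈ R satisfy wR = Rw, and suppose a, b ∈ R with ab = w. If α ∉ Ra, β ∉ bR and αβ ∈ RabR = wR, then a contradiction follows; i.e. for all α, β ∈ R with α ∉ Ra and β ∉ bR, we have αβ ∉ wR. (Key computation: writing a = rα and b = βs with r, s ∈ J, from αβ = wλ one derives w = rw μ for some μ ∈ R, contradicting r ∈ J.) -/
lemma isLeftIdeal_mul_right {R : Type*} [Ring R] (a : R) :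
    IsLeftIdeal {x : R | ∃ c : R, x = c * a} :=
  ⟨⟨0, (zero_mul a).symm⟩,
   fun _ ⟨c, hc⟩ _ ⟨d, hd⟩ => ⟨c + d, by rw [hc, hd, add_mul]⟩,
   fun _ ⟨c, hc⟩ r => ⟨r * c, by rw [hc, mul_assoc]⟩⟩

lemma isRightIdeal_mul_left {R : Type*} [Ring R] (a : R) :
    IsRightIdeal {x : R | ∃ c : R, x = a * c} :=
  ⟨⟨0, (mul_zero a).symm⟩,
   fun _ ⟨c, hc⟩ _ ⟨d, hd⟩ => ⟨c + d, by rw [hc, hd, mul_add]⟩,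
   fun _ ⟨c, hc⟩ r => ⟨c * r, by rw [hc, mul_assoc]⟩⟩

/-- Let `R` be a uniserial domain whose Jacobson radical `J` (the set of
non-units) satisfies `J² = J`, let `w ∈ R` satisfy `wR = Rw`, and let
`a, b ∈ R` with `a * b = w`. Then for all `α, β ∈ R` with `α ∉ Ra` and
`β ∉ bR`, we have `α * β ∉ wR`. -/
theorem consistency_of_pair
    {R : Type*} [Ring R] [IsDomain R] (hR : IsUniserialRing R)
    (hJ2 : {x : R | ∃ c d : R, ¬ IsUnit c ∧ ¬ IsUnit d ∧ x = c * d} =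
      {x : R | ¬ IsUnit x})
    (w a b : R)
    (hw : {x : R | ∃ r : R, x = w * r} = {x : R | ∃ r : R, x = r * w})
    (hab : a * b = w) :
    ∀ α β : R, (¬ ∃ r : R, α = r * a) → (¬ ∃ r : R, β = b * r) →
      ¬ ∃ r : R, α * β = w * r := by
  rintro α β hα hβ ⟨l, hl⟩
  -- w ≠ 0
  have hw0 : w ≠ 0 := by
    rintro rfl
    rw [zero_mul] at hl
    rcases mul_eq_zero.mp hl with h | h
    · exact hα ⟨0, by rw [h, zero_mul]⟩
    · exact hβ ⟨0, by rw [h, mul_zero]⟩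
  -- a = r * α for some r
  have ha : ∃ r : R, a = r * α := by
    rcases hR.2 _ _ (isLeftIdeal_mul_right a) (isLeftIdeal_mul_right α) with h | h
    · exact h ⟨1, (one_mul a).symm⟩
    · exact absurd (h ⟨1, (one_mul α).symm⟩) hα
  -- b = β * s for some s
  have hb : ∃ s : R, b = β * s := by
    rcases hR.1 _ _ (isRightIdeal_mul_left b) (isRightIdeal_mul_left β) with h | h
    · exact h ⟨1, (mul_one b).symm⟩
    · exact absurd (h ⟨1, (mul_one β).symm⟩) hβ
  obtain ⟨r, hr⟩ := ha
  obtain ⟨s, hs⟩ := hb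
  -- w = r * w * (l * s)
  have key : w = r * (w * (l * s)) := by
    calc w = a * b := hab.symm
    _ = (r * α) * (β * s) := by rw [hr, hs]
    _ = r * ((α * β) * s) := by noncomm_ring
    _ = r * (w * (l * s)) := by rw [hl]; noncomm_ring
  -- use wR = Rw
  obtain ⟨t, ht⟩ : ∃ t : R, w * (l * s) = t * w := by
    have : w * (l * s) ∈ {x : R | ∃ r : R, x = w * r} := ⟨l * s, rfl⟩
    rw [hw] at this
    exact this
  have hrt : r * t = 1 := by
    have : (r * t - 1) * w = 0 := by
      rw [ht] at key
      rw [sub_mul, one_mul, mul_assoc, ← key, sub_self]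
    rcases mul_eq_zero.mp this with h | h
    · exact sub_eq_zero.mp h
    · exact absurd h hw0
  have htr : t * r = 1 := by
    have : (t * r - 1) * t = 0 := by
      rw [sub_mul, one_mul, mul_assoc, hrt, mul_one, sub_self]
    rcases mul_eq_zero.mp this with h | h
    · exact sub_eq_zero.mp h
    · exfalso; rw [h, mul_zero] at hrt; exact one_ne_zero hrt.symm
  -- so r is a unit, giving α ∈ Ra, contradiction
  have hu : IsUnit r := ⟨⟨r, t, hrt, htr⟩, rfl⟩
  obtain ⟨u, hu⟩ := hu
  exact hα ⟨(↑u⁻¹ : Rˣ), by rw [hr, ← mul_assoc, ← hu, Units.inv_mul, one_mul]⟩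
end
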